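/- The map d̃_LS(d) := D-collapse of d^t on type-C partitions of size 2n is order reversing: if d and d' are type-C partitions of size 2n with d ≼ d' in the dominance order, then d̃_LS(d') ≼ d̃_LS(d). -/

import Mathlib

/-!
Partitions (Young diagrams) are represented as antitone, eventually-zero
functions `f : ℕ → ℕ`, where `f i` is the length of the `(i+1)`-st row.
-/

/-- `f : ℕ → ℕ` represents a partition (Young diagram). -/
def IsPartition (f : ℕ → ℕ) : Prop :=
  Antitone f ∧ ∃ N, ∀ i, N ≤ i → f i = 0

/-- The size of a partition: the sum of its parts. -/
noncomputable def size (f : ℕ → ℕ) : ℕ := ∑' i, f i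

/-- The sum of the `k` largest parts of a partition. -/
def psum (f : ℕ → ℕ) (k : ℕ) : ℕ := ∑ i ∈ Finset.range k, f i

/-- The multiplicity with which `p` occurs as a part. -/
noncomputable def mult (f : ℕ → ℕ) (p : ℕ) : ℕ := {i | f i = p}.ncard

/-- The transpose (conjugate) partition: `transpose f i` is the length of the
`(i+1)`-st column of `f`. -/
noncomputable def transpose (f : ℕ → ℕ) : ℕ → ℕ := fun i => {j | i < f j}.ncard

/-- The number of parts of a partition (the length of its first column). -/
noncomputable def numParts (f : ℕ → ℕ) : ℕ := {j | 0 < f j}.ncard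

/-- Type B: odd size, and every (positive) even part occurs with even multiplicity. -/
def IsTypeB (f : ℕ → ℕ) : Prop :=
  IsPartition f ∧ Odd (size f) ∧ ∀ p, 0 < p → Even p → Even (mult f p)

/-- Type C: even size, and every odd part occurs with even multiplicity. -/
def IsTypeC (f : ℕ → ℕ) : Prop :=
  IsPartition f ∧ Even (size f) ∧ ∀ p, Odd p → Even (mult f p)

/-- Type D: even size, and every (positive) even part occurs with even multiplicity. -/
def IsTypeD (f : ℕ → ℕ) : Prop :=
  IsPartition f ∧ Even (size f) ∧ ∀ p, 0 < p → Even p → Even (mult f p)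

/-- Dominance order `f ≼ g` between partitions of the same size. -/
def Dom (f g : ℕ → ℕ) : Prop :=
  size f = size g ∧ ∀ k, psum f k ≤ psum g k

/-- `c` is the X-collapse of `d`, where predicate `T` expresses "type X": `c` is
the greatest type-X partition of the same size dominated by `d`. -/
def IsCollapse (T : (ℕ → ℕ) → Prop) (d c : ℕ → ℕ) : Prop :=
  T c ∧ Dom c d ∧ ∀ e, T e → Dom e d → Dom e c

open Classical in
/-- The X-collapse of `d` (junk value if it does not exist). -/
noncomputable def collapse (T : (ℕ → ℕ) → Prop) (d : ℕ → ℕ) : ℕ → ℕ :=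
  if h : ∃ c, IsCollapse T d c then h.choose else fun _ => 0

/-- The B-collapse. -/
noncomputable def collapseB : (ℕ → ℕ) → ℕ → ℕ := collapse IsTypeB

/-- The C-collapse. -/
noncomputable def collapseC : (ℕ → ℕ) → ℕ → ℕ := collapse IsTypeC

/-- The D-collapse. -/
noncomputable def collapseD : (ℕ → ℕ) → ℕ → ℕ := collapse IsTypeD

/-- `d⁺`: add one box to the first row. -/
def boxPlus (f : ℕ → ℕ) : ℕ → ℕ := fun i => if i = 0 then f 0 + 1 else f i

/-- `d⁻`: remove one box from the last row (for nonempty `d`). -/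
noncomputable def boxMinus (f : ℕ → ℕ) : ℕ → ℕ :=
  fun i => if i = numParts f - 1 then f i - 1 else f i

/-- `∇(d)`: remove the first column (every part decreased by 1). -/
def delCol (f : ℕ → ℕ) : ℕ → ℕ := fun i => f i - 1

/-- `∇̌(d)`: remove the first row (delete one largest part). -/
def delRow (f : ℕ → ℕ) : ℕ → ℕ := fun i => f (i + 1)

/-- The metaplectic Lusztig–Spaltenstein map: the D-collapse of the transpose. -/
noncomputable def mLS (d : ℕ → ℕ) : ℕ → ℕ := collapseD (transpose d)

/-- The map `d̃_SP`: the C-collapse of `(e⁺)⁻`. -/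
noncomputable def mSP (e : ℕ → ℕ) : ℕ → ℕ := collapseC (boxMinus (boxPlus e))

/-- The metaplectic Barbasch–Vogan duality. -/
noncomputable def mBV (d : ℕ → ℕ) : ℕ → ℕ := mSP (mLS d)
section Aux
variable {f g q d : ℕ → ℕ} {N k n : ℕ}

lemma psum_mono (f : ℕ → ℕ) : Monotone (psum f) := fun a b h =>
  Finset.sum_le_sum_of_subset (Finset.range_subset_range.mpr h)

lemma size_eq_psum (hN : ∀ i, N ≤ i → f i = 0) : size f = psum f N :=
  tsum_eq_sum (fun b hb => hN b (by simpa using hb))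

lemma psum_le_size (hf : IsPartition f) (k : ℕ) : psum f k ≤ size f := by
  obtain ⟨-, N, hN⟩ := hf
  have : size f = psum f (max N k) := size_eq_psum (fun i hi => hN i (le_trans (le_max_left _ _) hi))
  rw [this]
  exact psum_mono f (le_max_right _ _)

lemma psum_eq_size_of_le (hf : IsPartition f) (hk : size f ≤ k) : psum f k = size f := by
  have hzero : ∀ i, k ≤ i → f i = 0 := by
    intro i hi
    by_contra h
    have h1 : 1 ≤ f i := Nat.one_le_iff_ne_zero.mpr h
    have : i + 1 ≤ psum f (i + 1) := by
      calc i + 1 = ∑ j ∈ Finset.range (i+1), 1 := by simp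
      _ ≤ psum f (i+1) := Finset.sum_le_sum (fun j hj => le_trans h1 (hf.1 (Nat.le_of_lt_succ (Finset.mem_range.mp hj))))
    have := le_trans this (psum_le_size hf (i+1))
    omega
  exact (size_eq_psum hzero).symm

lemma exists_f_le (hf : IsPartition f) (j : ℕ) : ∃ l, f l ≤ j := by
  obtain ⟨-, N, hN⟩ := hf
  exact ⟨N, by simp [hN N le_rfl]⟩

lemma setOf_lt_eq_Iio (hf : IsPartition f) (j : ℕ) :
    {l | j < f l} = Set.Iio (sInf {l | f l ≤ j}) := by
  have hne : {l | f l ≤ j}.Nonempty := exists_f_le hf j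
  ext l
  simp only [Set.mem_setOf_eq, Set.mem_Iio]
  constructor
  · intro h
    by_contra h'
    push_neg at h'
    have h1 : f l ≤ f (sInf {l | f l ≤ j}) := hf.1 h'
    have h2 : f (sInf {l | f l ≤ j}) ≤ j := Nat.sInf_mem hne
    omega
  · intro h
    have := Nat.notMem_of_lt_sInf h
    simp only [Set.mem_setOf_eq] at this
    omega

lemma transpose_eq_sInf (hf : IsPartition f) (j : ℕ) :
    transpose f j = sInf {l | f l ≤ j} := by
  rw [transpose, setOf_lt_eq_Iio hf, ← Finset.coe_range, Set.ncard_coe_finset,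
    Finset.card_range]

lemma lt_transpose_iff (hf : IsPartition f) {i j : ℕ} :
    i < transpose f j ↔ j < f i := by
  rw [transpose_eq_sInf hf]
  have := setOf_lt_eq_Iio hf j
  constructor
  · intro h
    have : i ∈ Set.Iio (sInf {l | f l ≤ j}) := h
    rw [← setOf_lt_eq_Iio hf] at this
    exact this
  · intro h
    have : i ∈ {l | j < f l} := h
    rw [setOf_lt_eq_Iio hf] at this
    exact this

lemma transpose_isPartition (hf : IsPartition f) : IsPartition (transpose f) := by
  constructor
  · intro j j' h
    by_contra h'
    push_neg at h'
    have h1 : j' < f (transpose f j) := (lt_transpose_iff hf).mp h'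
    have h2 : ¬ (j < f (transpose f j)) := fun hh => lt_irrefl _ ((lt_transpose_iff hf).mpr hh)
    omega
  · refine ⟨f 0, fun i hi => ?_⟩
    by_contra h
    have : i < f 0 := (lt_transpose_iff hf).mp (Nat.pos_of_ne_zero h)
    have := hf.1 (Nat.zero_le 0)
    omega

lemma transpose_transpose (hf : IsPartition f) : transpose (transpose f) = f := by
  funext i
  have h : ∀ l, l < transpose (transpose f) i ↔ l < f i := by
    intro l
    rw [lt_transpose_iff (transpose_isPartition hf), lt_transpose_iff hf]
  have h1 : ¬ (f i < transpose (transpose f) i) := fun hh => lt_irrefl _ ((h _).mp hh)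
  have h2 : ¬ (transpose (transpose f) i < f i) := fun hh => lt_irrefl _ ((h _).mpr hh)
  omega

end Aux
section Aux2
variable {f g : ℕ → ℕ} {N k : ℕ}

lemma transpose_apply_eq_card (hf : IsPartition f) (hN : ∀ i, N ≤ i → f i = 0) (i : ℕ) :
    transpose f i = ((Finset.range N).filter (fun j => i < f j)).card := by
  rw [transpose, ← Set.ncard_coe_finset]
  congr 1
  ext j
  simp only [Set.mem_setOf_eq, Finset.coe_filter, Finset.mem_range]
  constructor
  · intro h
    refine ⟨?_, h⟩
    by_contra hj
    push_neg at hj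
    have := hN j hj
    omega
  · tauto

lemma psum_transpose (hf : IsPartition f) (hN : ∀ i, N ≤ i → f i = 0) (k : ℕ) :
    psum (transpose f) k = ∑ j ∈ Finset.range N, min (f j) k := by
  unfold psum
  have h1 : ∀ i, transpose f i = ∑ j ∈ Finset.range N, (if i < f j then 1 else 0) := by
    intro i
    rw [transpose_apply_eq_card hf hN i, Finset.card_filter]
  calc ∑ i ∈ Finset.range k, transpose f i
      = ∑ i ∈ Finset.range k, ∑ j ∈ Finset.range N, (if i < f j then 1 else 0) := by
        exact Finset.sum_congr rfl (fun i _ => h1 i)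
    _ = ∑ j ∈ Finset.range N, ∑ i ∈ Finset.range k, (if i < f j then 1 else 0) :=
        Finset.sum_comm
    _ = ∑ j ∈ Finset.range N, min (f j) k := by
        refine Finset.sum_congr rfl (fun j _ => ?_)
        rw [← Finset.card_filter]
        have : (Finset.range k).filter (fun i => i < f j) = Finset.range (min (f j) k) := by
          ext i
          simp only [Finset.mem_filter, Finset.mem_range, lt_min_iff]
          tauto
        rw [this, Finset.card_range]

lemma size_transpose (hf : IsPartition f) : size (transpose f) = size f := by
  obtain ⟨hanti, N, hN⟩ := hf
  have hf' : IsPartition f := ⟨hanti, N, hN⟩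
  have hb : ∀ i, f 0 ≤ i → transpose f i = 0 := by
    intro i hi
    by_contra h
    have : i < f 0 := (lt_transpose_iff hf').mp (Nat.pos_of_ne_zero h)
    omega
  rw [size_eq_psum hb, psum_transpose hf' hN, size_eq_psum hN]
  refine Finset.sum_congr rfl (fun j _ => ?_)
  exact min_eq_left (hanti (Nat.zero_le j))

lemma transpose_le_bound (hf : IsPartition f) (hN : ∀ i, N ≤ i → f i = 0) (k : ℕ) :
    transpose f k ≤ N := by
  rw [transpose_eq_sInf hf]
  exact Nat.sInf_le (by simp [hN N le_rfl])

lemma psum_transpose_split (hf : IsPartition f) (hN : ∀ i, N ≤ i → f i = 0) (k : ℕ) :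
    psum (transpose f) k
      = k * transpose f k + ∑ j ∈ Finset.Ico (transpose f k) N, f j := by
  rw [psum_transpose hf hN k]
  set m := transpose f k with hm
  have hmN : m ≤ N := transpose_le_bound hf hN k
  rw [Finset.range_eq_Ico, ← Finset.sum_Ico_consecutive _ (Nat.zero_le m) hmN]
  congr 1
  · rw [← Finset.range_eq_Ico]
    have : ∀ j ∈ Finset.range m, min (f j) k = k := by
      intro j hj
      have : k < f j := (lt_transpose_iff hf).mp (Finset.mem_range.mp hj)
      omega
    rw [Finset.sum_congr rfl this]
    simp [Nat.mul_comm]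
  · refine Finset.sum_congr rfl (fun j hj => ?_)
    have hj' : m ≤ j := (Finset.mem_Ico.mp hj).1
    have : ¬ (k < f j) := fun hh => absurd ((lt_transpose_iff hf).mpr hh) (by omega)
    omega

lemma psum_add_Ico (f : ℕ → ℕ) {m : ℕ} (hmN : m ≤ N) :
    psum f m + ∑ j ∈ Finset.Ico m N, f j = psum f N := by
  unfold psum
  rw [Finset.range_eq_Ico, Finset.range_eq_Ico]
  exact Finset.sum_Ico_consecutive f (Nat.zero_le m) hmN

lemma dom_transpose (hf : IsPartition f) (hg : IsPartition g) (h : Dom f g) :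
    Dom (transpose g) (transpose f) := by
  obtain ⟨hsz, hps⟩ := h
  obtain ⟨haf, Nf, hNf⟩ := hf
  obtain ⟨hag, Ng, hNg⟩ := hg
  have hf : IsPartition f := ⟨haf, Nf, hNf⟩
  have hg : IsPartition g := ⟨hag, Ng, hNg⟩
  set N := max Nf Ng with hNdef
  have hNf' : ∀ i, N ≤ i → f i = 0 := fun i hi => hNf i (le_trans (le_max_left _ _) hi)
  have hNg' : ∀ i, N ≤ i → g i = 0 := fun i hi => hNg i (le_trans (le_max_right _ _) hi)
  refine ⟨by rw [size_transpose hg, size_transpose hf, hsz], fun k => ?_⟩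
  set m := transpose f k with hm
  have hmN : m ≤ N := transpose_le_bound hf hNf' k
  have key : psum (transpose g) k ≤ k * m + ∑ j ∈ Finset.Ico m N, g j := by
    rw [psum_transpose hg hNg' k, Finset.range_eq_Ico,
      ← Finset.sum_Ico_consecutive _ (Nat.zero_le m) hmN]
    gcongr with j hj
    · calc ∑ j ∈ Finset.Ico 0 m, min (g j) k ≤ ∑ j ∈ Finset.Ico 0 m, k :=
        Finset.sum_le_sum (fun j _ => min_le_right _ _)
      _ = k * m := by simp [Nat.mul_comm]
    · exact min_le_left _ _
  have h1 : psum f m + ∑ j ∈ Finset.Ico m N, f j = size f := by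
    rw [psum_add_Ico f hmN, ← size_eq_psum hNf']
  have h2 : psum g m + ∑ j ∈ Finset.Ico m N, g j = size g := by
    rw [psum_add_Ico g hmN, ← size_eq_psum hNg']
  have h3 : psum f m ≤ psum g m := hps m
  have h4 : ∑ j ∈ Finset.Ico m N, g j ≤ ∑ j ∈ Finset.Ico m N, f j := by omega
  calc psum (transpose g) k ≤ k * m + ∑ j ∈ Finset.Ico m N, g j := key
    _ ≤ k * m + ∑ j ∈ Finset.Ico m N, f j := by omega
    _ = psum (transpose f) k := (psum_transpose_split hf hNf' k).symm

end Aux2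
/-- Odd partial sums are all even. -/
def OddPsumEven (q : ℕ → ℕ) : Prop := ∀ t, Even (psum q (2 * t + 1))

section Aux3
variable {f q : ℕ → ℕ}

lemma mult_eq_transpose_sub (hf : IsPartition f) {p : ℕ} (hp : 0 < p) :
    mult f p = transpose f (p - 1) - transpose f p := by
  have hset : {i | f i = p} = Set.Ico (transpose f p) (transpose f (p - 1)) := by
    ext i
    simp only [Set.mem_setOf_eq, Set.mem_Ico]
    have h1 : i < transpose f (p - 1) ↔ p - 1 < f i := lt_transpose_iff hf
    have h2 : i < transpose f p ↔ p < f i := lt_transpose_iff hf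
    omega
  rw [mult, hset, ← Finset.coe_Ico, Set.ncard_coe_finset, Nat.card_Ico]

lemma psum_one (q : ℕ → ℕ) : psum q 1 = q 0 := by simp [psum]

lemma psum_succ (q : ℕ → ℕ) (k : ℕ) : psum q (k + 1) = psum q k + q k :=
  Finset.sum_range_succ q k

lemma typeD_iff (hf : IsPartition f) :
    IsTypeD f ↔ OddPsumEven (transpose f) := by
  obtain ⟨hanti, N, hN⟩ := hf
  have hf : IsPartition f := ⟨hanti, N, hN⟩
  set q := transpose f with hq
  have hqp : IsPartition q := transpose_isPartition hf
  have hsz : size q = size f := size_transpose hf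
  obtain ⟨M, hM⟩ := hqp.2
  have hsizeM : size q = psum q (2 * M + 1) :=
    size_eq_psum (fun i hi => hM i (by omega))
  have hpair : ∀ s, mult f (2 * s + 2) = q (2 * s + 1) - q (2 * s + 2) := by
    intro s
    have := mult_eq_transpose_sub hf (p := 2 * s + 2) (by omega)
    simpa using this
  have hstep : ∀ t, psum q (2 * (t + 1) + 1)
      = psum q (2 * t + 1) + (q (2 * t + 1) + q (2 * t + 2)) := by
    intro t
    have e1 : 2 * (t + 1) + 1 = (2 * t + 2) + 1 := by ring
    rw [e1, psum_succ, show 2 * t + 2 = (2 * t + 1) + 1 from rfl, psum_succ]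
    omega
  constructor
  · rintro ⟨-, hsize, hmult⟩
    have hpaireven : ∀ s, Even (q (2 * s + 1) + q (2 * s + 2)) := by
      intro s
      have h1 : Even (q (2 * s + 1) - q (2 * s + 2)) := by
        rw [← hpair s]; exact hmult _ (by omega) ⟨s + 1, by ring⟩
      have hle : q (2 * s + 2) ≤ q (2 * s + 1) := hqp.1 (by omega)
      rw [Nat.even_add]
      rw [Nat.even_sub hle] at h1
      exact h1
    have hiff : ∀ t, (Even (psum q (2 * t + 1)) ↔ Even (q 0)) := by
      intro t
      induction t with
      | zero => rw [psum_one]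
      | succ t ih =>
        rw [hstep t]
        obtain ⟨c, hc⟩ := hpaireven t
        have : Even (psum q (2 * t + 1) + (q (2 * t + 1) + q (2 * t + 2)))
            ↔ Even (psum q (2 * t + 1)) := by
          constructor
          · rintro ⟨a, ha⟩; exact ⟨a - c, by omega⟩
          · rintro ⟨a, ha⟩; exact ⟨a + c, by omega⟩
        rw [this]; exact ih
    have hq0 : Even (q 0) := by
      rw [← hiff M, ← hsizeM, hsz]; exact hsize
    exact fun t => (hiff t).mpr hq0
  · intro hE
    have hsizeeven : Even (size f) := by rw [← hsz, hsizeM]; exact hE M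
    refine ⟨hf, hsizeeven, fun p hp hpe => ?_⟩
    obtain ⟨s, rfl⟩ : ∃ s, p = 2 * s + 2 := by
      obtain ⟨r, hr⟩ := hpe; exact ⟨r - 1, by omega⟩
    rw [hpair s]
    have h1 := hE s
    have h2 := hE (s + 1)
    rw [hstep s] at h2
    have hle : q (2 * s + 2) ≤ q (2 * s + 1) := hqp.1 (by omega)
    have hps : Even (q (2 * s + 1) + q (2 * s + 2)) := by
      rcases h1 with ⟨a, ha⟩
      rcases h2 with ⟨b, hb⟩
      exact ⟨b - a, by omega⟩
    rw [Nat.even_sub hle]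
    rw [Nat.even_add] at hps
    exact hps

end Aux3
/-- Partitions of size `2n` with all odd partial sums even, dominating `d`. -/
def GoodD (n : ℕ) (d q : ℕ → ℕ) : Prop :=
  IsPartition q ∧ size q = 2 * n ∧ OddPsumEven q ∧ ∀ k, psum d k ≤ psum q k

section Aux4
variable {d : ℕ → ℕ} {n : ℕ}

lemma goodD_nonempty (hd : IsPartition d) (hsz : size d = 2 * n) :
    GoodD n d (fun i => if i = 0 then 2 * n else 0) := by
  set w : ℕ → ℕ := fun i => if i = 0 then 2 * n else 0 with hw
  have hwp : IsPartition w := by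
    constructor
    · apply antitone_nat_of_succ_le
      intro i
      simp [hw]
    · exact ⟨1, fun i hi => by simp [hw]; omega⟩
  have hpsum1 : ∀ k, psum w (k + 1) = 2 * n := by
    intro k
    induction k with
    | zero => simp [psum, hw]
    | succ k ih =>
      rw [psum_succ, ih]
      simp [hw]
  have hpsum : ∀ k, 1 ≤ k → psum w k = 2 * n := by
    intro k hk
    obtain ⟨m, rfl⟩ : ∃ m, k = m + 1 := ⟨k - 1, by omega⟩
    exact hpsum1 m
  have hwsz : size w = 2 * n := by
    rw [size_eq_psum (N := 1) (fun i hi => by simp [hw]; omega)]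
    exact hpsum 1 le_rfl
  refine ⟨hwp, hwsz, fun t => by rw [hpsum _ (by omega)]; exact ⟨n, by ring⟩, fun k => ?_⟩
  rcases Nat.eq_zero_or_pos k with rfl | hk
  · simp [psum]
  · rw [hpsum k hk, ← hsz]
    exact psum_le_size hd k

lemma exists_least_goodD (hd : IsPartition d) (hsz : size d = 2 * n) :
    ∃ q, GoodD n d q ∧ ∀ e, GoodD n d e → ∀ k, psum q k ≤ psum e k := by
  classical
  set S : ℕ → Set ℕ := fun k => {m | ∃ q, GoodD n d q ∧ psum q k = m} with hS
  have hne : ∀ k, (S k).Nonempty := fun k =>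
    ⟨_, _, goodD_nonempty hd hsz, rfl⟩
  set t : ℕ → ℕ := fun k => sInf (S k) with ht
  have hattain : ∀ k, ∃ q, GoodD n d q ∧ psum q k = t k := fun k => Nat.sInf_mem (hne k)
  have hle : ∀ k, ∀ q, GoodD n d q → t k ≤ psum q k := fun k q hq =>
    Nat.sInf_le ⟨q, hq, rfl⟩
  have ht0 : t 0 = 0 := by
    obtain ⟨q, hq, hqk⟩ := hattain 0
    have : psum q 0 = 0 := by simp [psum]
    omega
  have hmono : ∀ k, t k ≤ t (k + 1) := by
    intro k
    obtain ⟨q, hq, hqk⟩ := hattain (k + 1)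
    calc t k ≤ psum q k := hle k q hq
      _ ≤ psum q (k + 1) := psum_mono q (by omega)
      _ = t (k + 1) := hqk
  have hconc : ∀ k, t (k + 2) + t k ≤ 2 * t (k + 1) := by
    intro k
    obtain ⟨q, hq, hqk⟩ := hattain (k + 1)
    have h1 : t (k + 2) ≤ psum q (k + 2) := hle _ q hq
    have h2 : t k ≤ psum q k := hle _ q hq
    have h3 : psum q (k + 2) + psum q k ≤ 2 * psum q (k + 1) := by
      rw [psum_succ q (k + 1), psum_succ q k]
      have : q (k + 1) ≤ q k := hq.1.1 (by omega)
      omega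
    omega
  have hhi : ∀ k, 2 * n ≤ k → t k = 2 * n := by
    intro k hk
    obtain ⟨q, hq, hqk⟩ := hattain k
    rw [← hqk]
    have hs := hq.2.1
    have := psum_eq_size_of_le hq.1 (k := k) (by omega)
    omega
  have heven : ∀ s, Even (t (2 * s + 1)) := by
    intro s
    obtain ⟨q, hq, hqk⟩ := hattain (2 * s + 1)
    rw [← hqk]
    exact hq.2.2.1 s
  have hlow : ∀ k, psum d k ≤ t k := by
    intro k
    obtain ⟨q, hq, hqk⟩ := hattain k
    rw [← hqk]
    exact hq.2.2.2 k
  -- build the minimal partition from the increments of t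
  set q : ℕ → ℕ := fun k => t (k + 1) - t k with hqdef
  have hpsumq : ∀ k, psum q k = t k := by
    intro k
    induction k with
    | zero => simp [psum, ht0]
    | succ k ih =>
      rw [psum_succ, ih, hqdef]
      have := hmono k
      simp only
      omega
  have hqpart : IsPartition q := by
    constructor
    · apply antitone_nat_of_succ_le
      intro k
      have h1 := hconc k
      have h2 := hmono k
      have h3 := hmono (k + 1)
      have e2 : t (k + 1 + 1) = t (k + 2) := rfl
      simp only [hqdef]
      omega
    · refine ⟨2 * n, fun i hi => ?_⟩
      have h1 := hhi i (by omega)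
      have h2 := hhi (i + 1) (by omega)
      simp only [hqdef]
      omega
  have hqsz : size q = 2 * n := by
    rw [size_eq_psum (N := 2 * n) (fun i hi => by
      have h1 := hhi i (by omega)
      have h2 := hhi (i + 1) (by omega)
      simp only [hqdef]
      omega)]
    rw [hpsumq]
    exact hhi _ le_rfl
  refine ⟨q, ⟨hqpart, hqsz, fun s => by rw [hpsumq]; exact heven s,
    fun k => by rw [hpsumq]; exact hlow k⟩, fun e he k => ?_⟩
  rw [hpsumq]
  exact hle k e he

lemma exists_collapseD (hd : IsPartition d) (hsz : size d = 2 * n) :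
    ∃ c, IsCollapse IsTypeD (transpose d) c := by
  obtain ⟨q, ⟨hqp, hqsz, hqE, hqdom⟩, hleast⟩ := exists_least_goodD hd hsz
  refine ⟨transpose q, ?_, ?_, ?_⟩
  · rw [typeD_iff (transpose_isPartition hqp), transpose_transpose hqp]
    exact hqE
  · exact dom_transpose hd hqp ⟨by omega, hqdom⟩
  · intro e heD hedom
    have hep : IsPartition e := heD.1
    have h1 : Dom (transpose (transpose d)) (transpose e) :=
      dom_transpose hep (transpose_isPartition hd) hedom
    rw [transpose_transpose hd] at h1
    have hgood : GoodD n d (transpose e) := by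
      refine ⟨transpose_isPartition hep, ?_, ?_, h1.2⟩
      · rw [size_transpose hep, hedom.1, size_transpose hd, hsz]
      · rw [← typeD_iff hep]; exact heD
    have h2 : Dom q (transpose e) := by
      refine ⟨?_, hleast _ hgood⟩
      rw [size_transpose hep, hedom.1, size_transpose hd, hsz, hqsz]
    have h3 := dom_transpose hqp (transpose_isPartition hep) h2
    rwa [transpose_transpose hep] at h3

end Aux4
lemma collapse_spec {T : (ℕ → ℕ) → Prop} {d : ℕ → ℕ} (h : ∃ c, IsCollapse T d c) :
    IsCollapse T d (collapse T d) := by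
  rw [collapse, dif_pos h]
  exact h.choose_spec

lemma dom_trans {a b c : ℕ → ℕ} (h1 : Dom a b) (h2 : Dom b c) : Dom a c :=
  ⟨h1.1.trans h2.1, fun k => (h1.2 k).trans (h2.2 k)⟩

/-- the map `d̃_LS(d) := D-collapse of dᵗ` on type-C partitions of
size `2n` is order reversing for the dominance order. -/
theorem stmt_2 (n : ℕ) (d d' : ℕ → ℕ) (hd : IsTypeC d) (hd' : IsTypeC d')
    (hsize : size d = 2 * n) (hsize' : size d' = 2 * n) (hdom : Dom d d') :
    Dom (mLS d') (mLS d) := by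
  have hdp : IsPartition d := hd.1
  have hdp' : IsPartition d' := hd'.1
  have h : ∃ c, IsCollapse IsTypeD (transpose d) c := exists_collapseD hdp hsize
  have h' : ∃ c, IsCollapse IsTypeD (transpose d') c := exists_collapseD hdp' hsize'
  obtain ⟨hTc, hDc, hmax⟩ := collapse_spec h
  obtain ⟨hTc', hDc', hmax'⟩ := collapse_spec h'
  have htr : Dom (transpose d') (transpose d) := dom_transpose hdp hdp' hdom
  exact hmax _ hTc' (dom_trans hDc' htr)
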